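/- For all real numbers u, v with 0 ≤ u ≤ 1, 0 ≤ v ≤ 1, and u + v > 1, one has q(u) + q(v) − q(uv) − 1 = (1−u)(1−v)(u+v+uv−1), and this quantity is nonnegative. -/
import Mathlib

noncomputable def q (x : ℝ) : ℝ := if x ≤ 1 then x * (2 - x) else 1

theorem potential_identity_large (u v : ℝ) (hu : 0 ≤ u) (hu1 : u ≤ 1)
    (hv : 0 ≤ v) (hv1 : v ≤ 1) (hsum : 1 < u + v) :
    q u + q v - q (u * v) - 1 = (1 - u) * (1 - v) * (u + v + u * v - 1) ∧
    0 ≤ (1 - u) * (1 - v) * (u + v + u * v - 1) := by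
  have huv : u * v ≤ 1 := mul_le_one₀ hu1 hv hv1
  constructor
  · simp only [q, if_pos hu1, if_pos hv1, if_pos huv]; ring
  · apply mul_nonneg (mul_nonneg (by linarith) (by linarith))
    nlinarith
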